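/- Let I be the two-sided *-ideal of A(SL_θ(2,ℍ)) generated by the elements Σ_k (A_{ki})* A_{kj} − δ_{ij} for i,j = 1,…,4. Then I is a Hopf ideal: Δ(I) ⊆ I ⊗ A + A ⊗ I, ε(I) = 0, and S(I) ⊆ I; hence the quotient A(Sp_θ(2)) = A(SL_θ(2,ℍ))/I is a Hopf *-algebra. -/

import Mathlib

open Complex
open scoped TensorProduct

noncomputable section

/-- The 4×4 deformation matrix of phases η = [[1,1,μ̄,μ],[1,1,μ,μ̄],[μ,μ̄,1,1],[μ̄,μ,1,1]]. -/
def eta (μ : ℂ) : Fin 4 → Fin 4 → ℂ :=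
  ![![1, 1, star μ, μ], ![1, 1, μ, star μ],
    ![μ, star μ, 1, 1], ![star μ, μ, 1, 1]]

/-- The twisting tensor ε: equal to 1 except ε^{1324} = μ and its cyclic permutations,
ε^{1423} = μ̄ and its cyclic permutations (written here with 0-based indices). -/
def eps (μ : ℂ) (i j k l : Fin 4) : ℂ :=
  if (i,j,k,l) = ((0:Fin 4),(2:Fin 4),(1:Fin 4),(3:Fin 4)) ∨ (i,j,k,l) = (2,1,3,0) ∨
     (i,j,k,l) = (1,3,0,2) ∨ (i,j,k,l) = (3,0,2,1) then μ
  else if (i,j,k,l) = ((0:Fin 4),3,1,2) ∨ (i,j,k,l) = (3,1,2,0) ∨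
     (i,j,k,l) = (1,2,0,3) ∨ (i,j,k,l) = (2,0,3,1) then star μ
  else 1

/-- The quantum determinant det(A_θ) = Σ_σ (−1)^{|σ|} ε^σ A_{1σ(1)}A_{2σ(2)}A_{3σ(3)}A_{4σ(4)}. -/
def qdet {R : Type*} [Ring R] [Algebra ℂ R] (μ : ℂ) (A : Fin 4 → Fin 4 → R) : R :=
  ∑ σ : Equiv.Perm (Fin 4),
    (((Equiv.Perm.sign σ : ℤ) : ℂ) * eps μ (σ 0) (σ 1) (σ 2) (σ 3)) •
      (A 0 (σ 0) * A 1 (σ 1) * A 2 (σ 2) * A 3 (σ 3))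

/-- The algebraic complement (quantum cofactor) Â_{il}: a signed sum over the permutations σ
of {1,…,4} with σ(i) = l, of the twisted products of the entries A_{k,σ(k)}, k ≠ i, taken in
increasing order of k, with prefactor ε^{σ₁…l…σ₄} η^{σ₁ l} ⋯ η^{σ_{i−1} l}.  (The sign of the
induced permutation of three letters is (−1)^{i+l} times the sign of σ.) -/
def cof {R : Type*} [Ring R] [Algebra ℂ R] (μ : ℂ) (A : Fin 4 → Fin 4 → R) (i l : Fin 4) : R :=
  ∑ σ : Equiv.Perm (Fin 4),
    if σ i = l then
      (((-1 : ℂ)) ^ ((i : ℕ) + (l : ℕ)) * ((Equiv.Perm.sign σ : ℤ) : ℂ) *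
        eps μ (σ 0) (σ 1) (σ 2) (σ 3) *
        (((List.finRange 4).filter (fun k => decide (k < i))).map
          (fun k => eta μ (σ k) l)).prod) •
      (((List.finRange 4).map (fun k => if k = i then (1 : R) else A k (σ k))).prod)
    else 0

/-- The index involution j ↦ j' with j' = j + (−1)^{j+1} (1-based), i.e. 1↔2, 3↔4. -/
def qsw : Fin 4 → Fin 4 := ![1, 0, 3, 2]

/-- The two-sided ideal (as a ℂ-submodule) generated by a set G of elements of a ring. -/
def twoSidedSpan {H : Type*} [Ring H] [Algebra ℂ H] (G : Set H) : Submodule ℂ H :=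
  Submodule.span ℂ {x : H | ∃ a b : H, ∃ g ∈ G, x = a * g * b}

section Helpers

open Coalgebra HopfAlgebra


variable {R : Type*} {H : Type*} [CommSemiring R] [Semiring H] [HopfAlgebra R H]

noncomputable def myMulRepr {a b : H} {ι κ : Type*} (r : Coalgebra.Repr R a ι) (s : Coalgebra.Repr R b κ) :
    Coalgebra.Repr R (a * b) (ι × κ) where
  index := r.index ×ˢ s.index
  left := fun p => r.left p.1 * s.left p.2
  right := fun p => r.right p.1 * s.right p.2
  eq := by
    rw [Finset.sum_product, Bialgebra.comul_mul, ← r.eq, ← s.eq, Finset.sum_mul_sum]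
    simp [Algebra.TensorProduct.tmul_mul_tmul]

lemma my_counit_left {a : H} {ι : Type*} (r : Coalgebra.Repr R a ι) :
    ∑ i ∈ r.index, counit (R := R) (r.left i) • r.right i = a := by
  have h := congrArg (TensorProduct.lid R H) (Coalgebra.sum_counit_tmul_eq r)
  rw [map_sum] at h
  simp only [TensorProduct.lid_tmul] at h
  simpa using h

lemma my_counit_right {a : H} {ι : Type*} (r : Coalgebra.Repr R a ι) :
    ∑ i ∈ r.index, counit (R := R) (r.right i) • r.left i = a := by
  have h := congrArg (TensorProduct.rid R H) (Coalgebra.sum_tmul_counit_eq r)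
  rw [map_sum] at h
  simp only [TensorProduct.rid_tmul] at h
  simpa using h

lemma my_antipode_one : antipode (R := R) (1 : H) = 1 := by
  have h := mul_antipode_rTensor_comul_apply (R := R) (1 : H)
  simpa [Algebra.TensorProduct.one_def] using h

lemma my_swap4 {α β : Type*} {γ : α → Type*} {δ : β → Type*} {M : Type*} [AddCommMonoid M]
    (A : Finset α) (B : Finset β) (C : ∀ a, Finset (γ a)) (D : ∀ b, Finset (δ b))
    (f : (a : α) → γ a → (b : β) → δ b → M) :
    (∑ j ∈ B, ∑ l ∈ D j, ∑ i ∈ A, ∑ k ∈ C i, f i k j l)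
      = ∑ i ∈ A, ∑ k ∈ C i, ∑ j ∈ B, ∑ l ∈ D j, f i k j l := by
  calc (∑ j ∈ B, ∑ l ∈ D j, ∑ i ∈ A, ∑ k ∈ C i, f i k j l)
      = ∑ q ∈ B.sigma D, ∑ p ∈ A.sigma C, f p.1 p.2 q.1 q.2 := by
        simp only [Finset.sum_sigma]
    _ = ∑ p ∈ A.sigma C, ∑ q ∈ B.sigma D, f p.1 p.2 q.1 q.2 := Finset.sum_comm
    _ = ∑ i ∈ A, ∑ k ∈ C i, ∑ j ∈ B, ∑ l ∈ D j, f i k j l := by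
        simp only [Finset.sum_sigma]

lemma my_antipode_mul (x y : H) :
    antipode (R := R) (x * y) = antipode (R := R) y * antipode (R := R) x := by
  classical
  set S : H →ₗ[R] H := antipode (R := R) with hS
  have hSl : ∀ {a : H} {ι : Type _} (rep : Coalgebra.Repr R a ι),
      (∑ p ∈ rep.index, S (rep.left p) * rep.right p) = counit (R := R) a • 1 :=
    fun rep => sum_antipode_mul_eq_smul rep
  have hSr : ∀ {a : H} {ι : Type _} (rep : Coalgebra.Repr R a ι),
      (∑ p ∈ rep.index, rep.left p * S (rep.right p)) = counit (R := R) a • 1 :=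
    fun rep => sum_mul_antipode_eq_smul rep
  let r : Coalgebra.Repr R x (H × H) := ℛ R x
  let s : Coalgebra.Repr R y (H × H) := ℛ R y
  let r1 : ∀ i, Coalgebra.Repr R (r.left i) (H × H) := fun i => ℛ R (r.left i)
  let r2 : ∀ i, Coalgebra.Repr R (r.right i) (H × H) := fun i => ℛ R (r.right i)
  let s1 : ∀ j, Coalgebra.Repr R (s.left j) (H × H) := fun j => ℛ R (s.left j)
  let s2 : ∀ j, Coalgebra.Repr R (s.right j) (H × H) := fun j => ℛ R (s.right j)
  let κ : H ⊗[R] H →ₗ[R] H :=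
    LinearMap.mul' R H ∘ₗ TensorProduct.map S S ∘ₗ (TensorProduct.comm R H H).toLinearMap
  let μ : (H ⊗[R] H) ⊗[R] (H ⊗[R] H) →ₗ[R] H :=
    LinearMap.mul' R H ∘ₗ
      TensorProduct.map LinearMap.id (LinearMap.mul' R H ∘ₗ TensorProduct.map LinearMap.id κ) ∘ₗ
      (TensorProduct.assoc R H H (H ⊗[R] H)).toLinearMap ∘ₗ
      (TensorProduct.tensorTensorTensorComm R H H H H).toLinearMap
  let Φ : (H ⊗[R] (H ⊗[R] H)) ⊗[R] (H ⊗[R] (H ⊗[R] H)) →ₗ[R] H :=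
    LinearMap.mul' R H ∘ₗ
      TensorProduct.map (S ∘ₗ LinearMap.mul' R H) μ ∘ₗ
      (TensorProduct.tensorTensorTensorComm R H (H ⊗[R] H) H (H ⊗[R] H)).toLinearMap
  have hΦ : ∀ a b c d e f : H,
      Φ ((a ⊗ₜ[R] (b ⊗ₜ[R] c)) ⊗ₜ[R] (d ⊗ₜ[R] (e ⊗ₜ[R] f)))
        = S (a * d) * (b * (e * (S f * S c))) := by
    intro a b c d e f
    simp [Φ, μ, κ]
  have hx := Coalgebra.sum_tmul_tmul_eq (R := R) r r1 r2
  have hy := Coalgebra.sum_tmul_tmul_eq (R := R) s s1 s2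
  have key : Φ ((∑ i ∈ r.index, ∑ k ∈ (r2 i).index,
        r.left i ⊗ₜ[R] ((r2 i).left k ⊗ₜ[R] (r2 i).right k)) ⊗ₜ[R]
      (∑ j ∈ s.index, ∑ l ∈ (s2 j).index,
        s.left j ⊗ₜ[R] ((s2 j).left l ⊗ₜ[R] (s2 j).right l)))
      = Φ ((∑ i ∈ r.index, ∑ k ∈ (r1 i).index,
        (r1 i).left k ⊗ₜ[R] ((r1 i).right k ⊗ₜ[R] r.right i)) ⊗ₜ[R]
      (∑ j ∈ s.index, ∑ l ∈ (s1 j).index,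
        (s1 j).left l ⊗ₜ[R] ((s1 j).right l ⊗ₜ[R] s.right j))) := by
    rw [← hx, ← hy]
  simp only [TensorProduct.sum_tmul, TensorProduct.tmul_sum, map_sum, hΦ] at key
  have E1 : (∑ i ∈ r.index, ∑ k ∈ (r2 i).index, ∑ j ∈ s.index, ∑ l ∈ (s2 j).index,
      S (r.left i * s.left j) *
        ((r2 i).left k * ((s2 j).left l * (S ((s2 j).right l) * S ((r2 i).right k)))))
      = S (x * y) := by
    have step1 : ∀ i ∈ r.index, ∀ k ∈ (r2 i).index, ∀ j ∈ s.index,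
        (∑ l ∈ (s2 j).index, S (r.left i * s.left j) *
          ((r2 i).left k * ((s2 j).left l * (S ((s2 j).right l) * S ((r2 i).right k)))))
        = counit (R := R) (s.right j) •
            (S (r.left i * s.left j) * ((r2 i).left k * S ((r2 i).right k))) := by
      intro i _ k _ j _
      rw [← Finset.mul_sum, ← Finset.mul_sum]
      have : (∑ l ∈ (s2 j).index, (s2 j).left l * (S ((s2 j).right l) * S ((r2 i).right k)))
          = counit (R := R) (s.right j) • S ((r2 i).right k) := by
        simp_rw [← mul_assoc]
        rw [← Finset.sum_mul, hSr (s2 j), smul_mul_assoc, one_mul]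
      rw [this, mul_smul_comm, mul_smul_comm]
    calc (∑ i ∈ r.index, ∑ k ∈ (r2 i).index, ∑ j ∈ s.index, ∑ l ∈ (s2 j).index,
          S (r.left i * s.left j) *
            ((r2 i).left k * ((s2 j).left l * (S ((s2 j).right l) * S ((r2 i).right k)))))
        = ∑ i ∈ r.index, ∑ j ∈ s.index,
            (counit (R := R) (r.right i) * counit (R := R) (s.right j)) •
              S (r.left i * s.left j) := by
          refine Finset.sum_congr rfl fun i hi => ?_
          rw [Finset.sum_congr rfl fun k hk =>
            Finset.sum_congr rfl fun j hj => step1 i hi k hk j hj]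
          rw [Finset.sum_comm]
          refine Finset.sum_congr rfl fun j hj => ?_
          rw [← Finset.smul_sum, ← Finset.mul_sum, hSr (r2 i)]
          rw [mul_smul_comm, mul_one, smul_smul, mul_comm]
      _ = S (x * y) := by
          have h := congrArg S (my_counit_right (myMulRepr r s)).symm
          rw [map_sum] at h
          simp only [myMulRepr, Finset.sum_product, map_smul, Bialgebra.counit_mul] at h
          rw [h]
  have E2 : (∑ i ∈ r.index, ∑ k ∈ (r1 i).index, ∑ j ∈ s.index, ∑ l ∈ (s1 j).index,
      S ((r1 i).left k * (s1 j).left l) *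
        ((r1 i).right k * ((s1 j).right l * (S (s.right j) * S (r.right i)))))
      = S y * S x := by
    have step1 : ∀ i ∈ r.index, ∀ j ∈ s.index,
        (∑ k ∈ (r1 i).index, ∑ l ∈ (s1 j).index,
          S ((r1 i).left k * (s1 j).left l) *
            ((r1 i).right k * ((s1 j).right l * (S (s.right j) * S (r.right i)))))
        = (counit (R := R) (r.left i) * counit (R := R) (s.left j)) •
            (S (s.right j) * S (r.right i)) := by
      intro i _ j _
      have hm := hSl (myMulRepr (r1 i) (s1 j))
      simp only [myMulRepr, Finset.sum_product] at hm
      calc (∑ k ∈ (r1 i).index, ∑ l ∈ (s1 j).index,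
            S ((r1 i).left k * (s1 j).left l) *
              ((r1 i).right k * ((s1 j).right l * (S (s.right j) * S (r.right i)))))
          = (∑ k ∈ (r1 i).index, ∑ l ∈ (s1 j).index,
              S ((r1 i).left k * (s1 j).left l) * ((r1 i).right k * (s1 j).right l)) *
              (S (s.right j) * S (r.right i)) := by
            rw [Finset.sum_mul]
            refine Finset.sum_congr rfl fun k _ => ?_
            rw [Finset.sum_mul]
            refine Finset.sum_congr rfl fun l _ => ?_
            rw [mul_assoc, mul_assoc]
        _ = (counit (R := R) (r.left i) * counit (R := R) (s.left j)) •
              (S (s.right j) * S (r.right i)) := by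
            rw [hm, smul_mul_assoc, one_mul, Bialgebra.counit_mul]
    calc (∑ i ∈ r.index, ∑ k ∈ (r1 i).index, ∑ j ∈ s.index, ∑ l ∈ (s1 j).index,
          S ((r1 i).left k * (s1 j).left l) *
            ((r1 i).right k * ((s1 j).right l * (S (s.right j) * S (r.right i)))))
        = ∑ i ∈ r.index, ∑ j ∈ s.index,
            (counit (R := R) (r.left i) * counit (R := R) (s.left j)) •
              (S (s.right j) * S (r.right i)) := by
          refine Finset.sum_congr rfl fun i hi => ?_
          rw [Finset.sum_comm]
          exact Finset.sum_congr rfl fun j hj => step1 i hi j hj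
      _ = S y * S x := by
          have hxx := congrArg S (my_counit_left r).symm
          have hyy := congrArg S (my_counit_left s).symm
          rw [map_sum] at hxx hyy
          simp only [map_smul] at hxx hyy
          rw [hxx, hyy, Finset.sum_mul_sum]
          rw [Finset.sum_comm]
          refine Finset.sum_congr rfl fun i _ => Finset.sum_congr rfl fun j _ => ?_
          rw [smul_mul_smul_comm, mul_comm]
  have key2 : (∑ i ∈ r.index, ∑ k ∈ (r2 i).index, ∑ j ∈ s.index, ∑ l ∈ (s2 j).index,
      S (r.left i * s.left j) *
        ((r2 i).left k * ((s2 j).left l * (S ((s2 j).right l) * S ((r2 i).right k)))))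
      = ∑ i ∈ r.index, ∑ k ∈ (r1 i).index, ∑ j ∈ s.index, ∑ l ∈ (s1 j).index,
      S ((r1 i).left k * (s1 j).left l) *
        ((r1 i).right k * ((s1 j).right l * (S (s.right j) * S (r.right i)))) := by
    refine ((my_swap4 r.index s.index (fun i => (r2 i).index) (fun j => (s2 j).index)
      (fun i k j l => S (r.left i * s.left j) *
        ((r2 i).left k * ((s2 j).left l * (S ((s2 j).right l) * S ((r2 i).right k)))))).symm).trans
      (key.trans (my_swap4 r.index s.index (fun i => (r1 i).index) (fun j => (s1 j).index)
      (fun i k j l => S ((r1 i).left k * (s1 j).left l) *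
        ((r1 i).right k * ((s1 j).right l * (S (s.right j) * S (r.right i)))))))
  rw [E1, E2] at key2
  exact key2

end Helpers

/-- the two-sided *-ideal I of A(SL_θ(2,ℍ)) generated by the elements
Σ_k (A_{ki})* A_{kj} − δ_{ij} is a Hopf ideal: ε(I) = 0, S(I) ⊆ I and
Δ(I) ⊆ I ⊗ A + A ⊗ I. -/
theorem stmt10 {H : Type*} [Ring H] [StarRing H] [HopfAlgebra ℂ H]
    (θ : ℝ) (μ : ℂ) (hμ : μ = Complex.exp (Real.pi * Complex.I * θ))
    (A : Fin 4 → Fin 4 → H)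
    (hA : ∀ i j k l, A i j * A k l = (eta μ k i * eta μ j l) • (A k l * A i j))
    (hqstar : ∀ j k, star (A j k) = ((-1 : ℂ) ^ ((j : ℕ) + (k : ℕ))) • A (qsw j) (qsw k))
    (hdet : qdet μ A = 1)
    (hcomul : ∀ i j, Coalgebra.comul (R := ℂ) (A i j) = ∑ k, A i k ⊗ₜ[ℂ] A k j)
    (hcounit : ∀ i j, Coalgebra.counit (R := ℂ) (A i j) = if i = j then (1 : ℂ) else 0)
    (hantipode : ∀ i j, HopfAlgebra.antipode (R := ℂ) (A i j)
        = ((-1 : ℂ) ^ ((i : ℕ) + (j : ℕ))) • cof μ A j i)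
    (G : Set H)
    (hG : G = {x : H | ∃ i j : Fin 4,
        x = (∑ k, star (A k i) * A k j) - (if i = j then 1 else 0)}) :
    (∀ x ∈ twoSidedSpan (G ∪ star '' G), Coalgebra.counit (R := ℂ) x = (0 : ℂ)) ∧
    (∀ x ∈ twoSidedSpan (G ∪ star '' G),
        HopfAlgebra.antipode (R := ℂ) x ∈ twoSidedSpan (G ∪ star '' G)) ∧
    (∀ x ∈ twoSidedSpan (G ∪ star '' G),
        Coalgebra.comul (R := ℂ) x ∈ Submodule.span ℂ
          {t : H ⊗[ℂ] H |
            (∃ a ∈ twoSidedSpan (G ∪ star '' G), ∃ b : H, t = a ⊗ₜ[ℂ] b) ∨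
            (∃ a : H, ∃ b ∈ twoSidedSpan (G ∪ star '' G), t = a ⊗ₜ[ℂ] b)}) := by
  classical
  subst hG
  -- basic facts about qsw and signs
  have qsw_invol : ∀ a : Fin 4, qsw (qsw a) = a := by decide
  have qsw_inj : Function.Injective qsw := by decide
  have qsw_bij : Function.Bijective qsw :=
    ⟨qsw_inj, Finite.surjective_of_injective qsw_inj⟩
  have hsgn : ∀ a : Fin 4, ((-1 : ℂ)) ^ ((qsw a : ℕ)) = -((-1 : ℂ) ^ ((a : ℕ))) := by
    intro a
    fin_cases a <;>
      norm_num [qsw, show ((0 : Fin 4) : ℕ) = 0 from rfl, show ((1 : Fin 4) : ℕ) = 1 from rfl,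
        show ((2 : Fin 4) : ℕ) = 2 from rfl, show ((3 : Fin 4) : ℕ) = 3 from rfl]
  have hs2 : ∀ n : ℕ, ((-1 : ℂ)) ^ n * (-1 : ℂ) ^ n = 1 := by
    intro n; rw [← pow_add]; exact Even.neg_one_pow ⟨n, rfl⟩
  have hAq : ∀ a b : Fin 4, A (qsw a) (qsw b) = ((-1 : ℂ)) ^ ((a : ℕ) + (b : ℕ)) • star (A a b) := by
    intro a b; rw [hqstar a b, smul_smul, hs2, one_smul]
  have hstar2 : ∀ a b : Fin 4,
      star (A (qsw a) (qsw b)) = ((-1 : ℂ)) ^ ((a : ℕ) + (b : ℕ)) • A a b := by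
    intro a b
    rw [hqstar (qsw a) (qsw b), qsw_invol, qsw_invol]
    congr 1
    rw [pow_add, pow_add, hsgn, hsgn]; ring
  have haS : ∀ a b : Fin 4, A a b = ((-1 : ℂ)) ^ ((a : ℕ) + (b : ℕ)) • star (A (qsw a) (qsw b)) := by
    intro a b; rw [hstar2 a b, smul_smul, hs2, one_smul]
  -- the star image of the generating set is contained in it
  have hstarsub : star '' {x : H | ∃ i j : Fin 4,
        x = (∑ k, star (A k i) * A k j) - (if i = j then 1 else 0)}
      ⊆ {x : H | ∃ i j : Fin 4,
        x = (∑ k, star (A k i) * A k j) - (if i = j then 1 else 0)} := by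
    rintro x ⟨g, ⟨i, j, rfl⟩, rfl⟩
    refine ⟨j, i, ?_⟩
    rw [star_sub, star_sum]
    congr 1
    · exact Finset.sum_congr rfl fun k _ => by rw [star_mul, star_star]
    · by_cases h : i = j
      · subst h; simp
      · simp [h, Ne.symm h]
  have hU : ({x : H | ∃ i j : Fin 4,
        x = (∑ k, star (A k i) * A k j) - (if i = j then 1 else 0)}
      ∪ star '' {x : H | ∃ i j : Fin 4,
        x = (∑ k, star (A k i) * A k j) - (if i = j then 1 else 0)})
      = {x : H | ∃ i j : Fin 4,
        x = (∑ k, star (A k i) * A k j) - (if i = j then 1 else 0)} :=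
    Set.union_eq_self_of_subset_right hstarsub
  simp only [hU]
  set S : H →ₗ[ℂ] H := HopfAlgebra.antipode (R := ℂ) with hSdef
  have Sone : S (1 : H) = 1 := my_antipode_one
  have Smul : ∀ x y : H, S (x * y) = S y * S x := fun x y => my_antipode_mul x y
  set I : Submodule ℂ H := twoSidedSpan {x : H | ∃ i j : Fin 4,
      x = (∑ k, star (A k i) * A k j) - (if i = j then 1 else 0)} with hIdef
  have hgenmem : ∀ a b : H, ∀ i j : Fin 4,
      a * ((∑ k, star (A k i) * A k j) - (if i = j then 1 else 0)) * b ∈ I :=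
    fun a b i j => Submodule.subset_span ⟨a, b, _, ⟨i, j, rfl⟩, rfl⟩
  have hEmem : ∀ i j : Fin 4,
      (∑ k, star (A k i) * A k j) - (if i = j then 1 else 0) ∈ I := by
    intro i j
    have := hgenmem 1 1 i j
    simpa using this
  have hIdeal : ∀ (c d x : H), x ∈ I → c * x * d ∈ I := by
    intro c d x hx
    induction hx using Submodule.span_induction with
    | mem x h =>
      obtain ⟨a, b, g, hg, rfl⟩ := h
      have hre : c * (a * g * b) * d = (c * a) * g * (b * d) := by
        simp [mul_assoc]
      rw [hre]
      exact Submodule.subset_span ⟨c * a, b * d, g, hg, rfl⟩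
    | zero => simpa using zero_mem I
    | add x y hx hy ihx ihy => rw [mul_add, add_mul]; exact add_mem ihx ihy
    | smul r x hx ih =>
      rw [mul_smul_comm, smul_mul_assoc]
      exact Submodule.smul_mem _ _ ih
  have hIl : ∀ (c x : H), x ∈ I → c * x ∈ I := fun c x h => by
    simpa using hIdeal c 1 x h
  have hIr : ∀ (d x : H), x ∈ I → x * d ∈ I := fun d x h => by
    simpa using hIdeal 1 d x h
  have hmulmod : ∀ x x' y y' : H, x - x' ∈ I → y - y' ∈ I → x * y - x' * y' ∈ I := by
    intro x x' y y' h1 h2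
    have : x * y - x' * y' = x * (y - y') + (x - x') * y' := by noncomm_ring
    rw [this]
    exact add_mem (hIl x _ h2) (hIr y' _ h1)
  -- the antipode inverse relations
  have P1 : ∀ i j : Fin 4, (∑ k, A i k * S (A k j)) = (if i = j then (1 : H) else 0) := by
    intro i j
    have h := HopfAlgebra.mul_antipode_lTensor_comul_apply (R := ℂ) (A i j)
    rw [hcomul, map_sum, map_sum, hcounit] at h
    simp only [LinearMap.lTensor_tmul, LinearMap.mul'_apply] at h
    rw [h, apply_ite (algebraMap ℂ H), map_one, map_zero]
  have P2 : ∀ i j : Fin 4, (∑ k, S (A i k) * A k j) = (if i = j then (1 : H) else 0) := by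
    intro i j
    have h := HopfAlgebra.mul_antipode_rTensor_comul_apply (R := ℂ) (A i j)
    rw [hcomul, map_sum, map_sum, hcounit] at h
    simp only [LinearMap.rTensor_tmul, LinearMap.mul'_apply] at h
    rw [h, apply_ite (algebraMap ℂ H), map_one, map_zero]
  -- S(A i j) agrees with star (A j i) modulo I
  have L1 : ∀ i j : Fin 4,
      (∑ k, ((∑ m, star (A m i) * A m k) - (if i = k then 1 else 0)) * S (A k j))
        = star (A j i) - S (A i j) := by
    intro i j
    calc (∑ k, ((∑ m, star (A m i) * A m k) - (if i = k then 1 else 0)) * S (A k j))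
        = ∑ k, ((∑ m, star (A m i) * (A m k * S (A k j)))
            - (if i = k then S (A k j) else 0)) := by
          refine Finset.sum_congr rfl fun k _ => ?_
          rw [sub_mul, Finset.sum_mul, ite_mul, one_mul, zero_mul]
          simp_rw [mul_assoc]
      _ = (∑ m, star (A m i) * (∑ k, A m k * S (A k j))) - S (A i j) := by
          rw [Finset.sum_sub_distrib]
          congr 1
          · rw [Finset.sum_comm]
            exact Finset.sum_congr rfl fun m _ => by rw [← Finset.mul_sum]
          · simp
      _ = star (A j i) - S (A i j) := by
          congr 1
          simp_rw [P1]
          simp [mul_ite]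
  have hSA : ∀ i j : Fin 4, star (A j i) - S (A i j) ∈ I := by
    intro i j
    rw [← L1 i j]
    exact Submodule.sum_mem _ fun k _ => hIr _ _ (hEmem i k)
  -- the "A A* = 1 mod I" relations
  have F : ∀ p q : Fin 4,
      (∑ m, A p m * star (A q m)) - (if p = q then 1 else 0) ∈ I := by
    intro p q
    have he : (∑ m, A p m * star (A q m)) - (if p = q then 1 else 0)
        = ∑ m, A p m * (star (A q m) - S (A m q)) := by
      rw [← P1 p q]
      simp [mul_sub, Finset.sum_sub_distrib]
    rw [he]
    exact Submodule.sum_mem _ fun m _ => hIl _ _ (hSA m q)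
  -- the antipode maps generators into I
  have hSE : ∀ i j : Fin 4,
      S ((∑ k, star (A k i) * A k j) - (if i = j then 1 else 0)) ∈ I := by
    intro i j
    rw [map_sub, map_sum]
    have hone : S ((if i = j then (1 : H) else 0)) = (if i = j then (1 : H) else 0) := by
      split
      · exact Sone
      · exact map_zero S
    rw [hone]
    have hterm : ∀ k : Fin 4, S (star (A k i) * A k j)
        = S (A k j) * (((-1 : ℂ)) ^ ((k : ℕ) + (i : ℕ)) • S (A (qsw k) (qsw i))) := by
      intro k
      rw [Smul, hqstar k i, map_smul, mul_smul_comm]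
    rw [Finset.sum_congr rfl fun k _ => hterm k]
    have step1 : ∀ k : Fin 4,
        S (A k j) * (((-1 : ℂ)) ^ ((k : ℕ) + (i : ℕ)) • S (A (qsw k) (qsw i)))
          - star (A j k) * A i k ∈ I := by
      intro k
      have e2 : ((-1 : ℂ)) ^ ((k : ℕ) + (i : ℕ)) • star (A (qsw i) (qsw k)) = A i k := by
        rw [hstar2 i k, smul_smul,
          show ((-1 : ℂ)) ^ ((k : ℕ) + (i : ℕ)) * ((-1 : ℂ)) ^ ((i : ℕ) + (k : ℕ)) = 1 from by
            rw [add_comm (k : ℕ)]; exact hs2 _, one_smul]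
      have d1 : S (A k j) - star (A j k) ∈ I := by
        have := Submodule.neg_mem _ (hSA k j); rwa [neg_sub] at this
      have d2 : (((-1 : ℂ)) ^ ((k : ℕ) + (i : ℕ)) • S (A (qsw k) (qsw i)))
          - (((-1 : ℂ)) ^ ((k : ℕ) + (i : ℕ)) • star (A (qsw i) (qsw k))) ∈ I := by
        rw [← smul_sub]
        refine Submodule.smul_mem _ _ ?_
        have := Submodule.neg_mem _ (hSA (qsw k) (qsw i)); rwa [neg_sub] at this
      have := hmulmod _ _ _ _ d1 d2
      rwa [e2] at this
    have hZ : (∑ k, star (A j k) * A i k) - (if i = j then 1 else 0) ∈ I := by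
      have e : (∑ k, star (A j k) * A i k)
          = ((-1 : ℂ)) ^ ((i : ℕ) + (j : ℕ)) • ∑ m, A (qsw j) m * star (A (qsw i) m) := by
        rw [Finset.smul_sum]
        refine (Fintype.sum_bijective qsw qsw_bij _ _ fun k => ?_)
        rw [hqstar j k, haS i k, smul_mul_smul_comm]
        congr 1
        rw [← pow_add,
          show ((j : ℕ) + (k : ℕ) + ((i : ℕ) + (k : ℕ))) = ((i : ℕ) + (j : ℕ)) + 2 * (k : ℕ) from by ring,
          pow_add, pow_mul, neg_one_sq, one_pow, mul_one]
      rw [e]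
      by_cases hij : i = j
      · subst hij
        rw [if_pos rfl, show ((-1 : ℂ)) ^ ((i : ℕ) + (i : ℕ)) = 1 from Even.neg_one_pow ⟨(i : ℕ), rfl⟩,
          one_smul]
        have := F (qsw i) (qsw i)
        rwa [if_pos rfl] at this
      · rw [if_neg hij, sub_zero]
        have hq : ¬ (qsw j = qsw i) := fun h => hij (qsw_inj h).symm
        have := F (qsw j) (qsw i)
        rw [if_neg hq, sub_zero] at this
        exact Submodule.smul_mem _ _ this
    have final : (∑ k, S (A k j) * (((-1 : ℂ)) ^ ((k : ℕ) + (i : ℕ)) • S (A (qsw k) (qsw i))))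
        - (if i = j then (1 : H) else 0)
        = (∑ k, (S (A k j) * (((-1 : ℂ)) ^ ((k : ℕ) + (i : ℕ)) • S (A (qsw k) (qsw i)))
            - star (A j k) * A i k))
          + ((∑ k, star (A j k) * A i k) - (if i = j then 1 else 0)) := by
      rw [Finset.sum_sub_distrib]
      abel
    rw [final]
    exact add_mem (Submodule.sum_mem _ fun k _ => step1 k) hZ
  -- counit kills the generators
  have hCE : ∀ i j : Fin 4,
      Coalgebra.counit (R := ℂ) ((∑ k, star (A k i) * A k j) - (if i = j then 1 else 0))
        = 0 := by
    intro i j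
    rw [map_sub, map_sum]
    have h1 : ∀ k : Fin 4, Coalgebra.counit (R := ℂ) (star (A k i) * A k j)
        = (((-1 : ℂ)) ^ ((k : ℕ) + (i : ℕ)) * (if k = i then 1 else 0))
            * (if k = j then 1 else 0) := by
      intro k
      rw [Bialgebra.counit_mul, hqstar, map_smul, hcounit, hcounit, smul_eq_mul]
      congr 2
      simp [qsw_inj.eq_iff]
    rw [Finset.sum_congr rfl fun k _ => h1 k]
    have h2 : Coalgebra.counit (R := ℂ) ((if i = j then (1 : H) else 0))
        = (if i = j then (1 : ℂ) else 0) := by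
      split <;> simp
    rw [h2]
    by_cases hij : i = j
    · subst hij
      simp only [mul_ite, mul_one, mul_zero, ite_mul, zero_mul, if_pos rfl]
      rw [Finset.sum_ite_eq' Finset.univ i (fun k => if k = i then ((-1:ℂ)) ^ ((k : ℕ) + (i : ℕ)) else 0)]
      simp [Even.neg_one_pow ⟨(i : ℕ), rfl⟩]
    · simp only [if_neg hij, sub_zero]
      rw [Finset.sum_eq_zero]
      intro k _
      by_cases hki : k = i
      · subst hki; simp [hij]
      · simp [hki]
  -- comul of star of a generator
  have dStar : ∀ k i : Fin 4, Coalgebra.comul (R := ℂ) (star (A k i))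
      = ∑ n, star (A k n) ⊗ₜ[ℂ] star (A n i) := by
    intro k i
    rw [hqstar k i, map_smul, hcomul, Finset.smul_sum]
    symm
    refine (Fintype.sum_bijective qsw qsw_bij _ _ fun n => ?_)
    rw [hAq k n, hAq n i]
    simp only [TensorProduct.smul_tmul', TensorProduct.tmul_smul, smul_smul]
    rw [show ((-1 : ℂ)) ^ ((k : ℕ) + (i : ℕ)) * (((-1 : ℂ)) ^ ((n : ℕ) + (i : ℕ)) * ((-1 : ℂ)) ^ ((k : ℕ) + (n : ℕ))) = 1 from by
        rw [← pow_add, ← pow_add,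
          show ((k : ℕ) + (i : ℕ)) + (((n : ℕ) + (i : ℕ)) + ((k : ℕ) + (n : ℕ)))
            = 2 * ((k : ℕ) + (n : ℕ) + (i : ℕ)) from by ring, pow_mul, neg_one_sq, one_pow],
      one_smul]
  -- comul of a generator
  have hComulE : ∀ i j : Fin 4,
      Coalgebra.comul (R := ℂ) ((∑ k, star (A k i) * A k j) - (if i = j then 1 else 0))
        = (∑ n, ∑ m, ((∑ k, star (A k n) * A k m) - (if n = m then 1 else 0))
              ⊗ₜ[ℂ] (star (A n i) * A m j))
          + 1 ⊗ₜ[ℂ] ((∑ k, star (A k i) * A k j) - (if i = j then 1 else 0)) := by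
    intro i j
    rw [map_sub, map_sum]
    have hci : Coalgebra.comul (R := ℂ) ((if i = j then (1 : H) else 0))
        = (if i = j then (1 : H ⊗[ℂ] H) else 0) := by
      split <;> simp
    rw [hci]
    simp_rw [Bialgebra.comul_mul, dStar, hcomul, Finset.sum_mul_sum,
      Algebra.TensorProduct.tmul_mul_tmul]
    rw [Finset.sum_comm]
    have hswap : ∀ n : Fin 4,
        (∑ k, ∑ m, (star (A k n) * A k m) ⊗ₜ[ℂ] (star (A n i) * A m j))
          = ∑ m, (∑ k, star (A k n) * A k m) ⊗ₜ[ℂ] (star (A n i) * A m j) := by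
      intro n
      rw [Finset.sum_comm]
      exact Finset.sum_congr rfl fun m _ => (TensorProduct.sum_tmul _ _ _).symm
    rw [Finset.sum_congr rfl fun n _ => hswap n]
    have hsplit : ∀ n m : Fin 4,
        (∑ k, star (A k n) * A k m) ⊗ₜ[ℂ] (star (A n i) * A m j)
          = ((∑ k, star (A k n) * A k m) - (if n = m then 1 else 0))
              ⊗ₜ[ℂ] (star (A n i) * A m j)
            + (if n = m then (1 : H) else 0) ⊗ₜ[ℂ] (star (A n i) * A m j) := by
      intro n m
      rw [← TensorProduct.add_tmul, sub_add_cancel]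
    rw [Finset.sum_congr rfl fun n _ => Finset.sum_congr rfl fun m _ => hsplit n m]
    simp_rw [Finset.sum_add_distrib]
    have hdiag : ∀ n : Fin 4,
        (∑ m, (if n = m then (1 : H) else 0) ⊗ₜ[ℂ] (star (A n i) * A m j))
          = 1 ⊗ₜ[ℂ] (star (A n i) * A n j) := by
      intro n
      rw [Finset.sum_eq_single n]
      · rw [if_pos rfl]
      · intro m _ hm; rw [if_neg (fun h => hm h.symm), TensorProduct.zero_tmul]
      · intro h; exact absurd (Finset.mem_univ n) h
    rw [Finset.sum_congr rfl fun n _ => hdiag n]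
    have hlast : (∑ n, 1 ⊗ₜ[ℂ] (star (A n i) * A n j)) - (if i = j then (1 : H ⊗[ℂ] H) else 0)
        = 1 ⊗ₜ[ℂ] ((∑ k, star (A k i) * A k j) - (if i = j then 1 else 0)) := by
      rw [TensorProduct.tmul_sub, TensorProduct.tmul_sum]
      congr 1
      by_cases hij : i = j
      · subst hij; rw [if_pos rfl, if_pos rfl, Algebra.TensorProduct.one_def]
      · rw [if_neg hij, if_neg hij, TensorProduct.tmul_zero]
    rw [← hlast]
    abel
  -- now the three parts
  refine ⟨?_, ?_, ?_⟩
  · -- counit vanishes on I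
    intro x hx
    induction hx using Submodule.span_induction with
    | mem x h =>
      obtain ⟨a, b, g, ⟨i, j, rfl⟩, rfl⟩ := h
      rw [Bialgebra.counit_mul, Bialgebra.counit_mul, hCE i j, mul_zero, zero_mul]
    | zero => simp
    | add x y hx hy ihx ihy => rw [map_add, ihx, ihy, add_zero]
    | smul r x hx ih => rw [map_smul, ih, smul_zero]
  · -- antipode preserves I
    intro x hx
    induction hx using Submodule.span_induction with
    | mem x h =>
      obtain ⟨a, b, g, ⟨i, j, rfl⟩, rfl⟩ := h
      rw [Smul, Smul]
      have h2 := hIdeal (S b) (S a) _ (hSE i j)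
      rwa [mul_assoc] at h2
    | zero => simpa using zero_mem I
    | add x y hx hy ihx ihy => rw [map_add]; exact add_mem ihx ihy
    | smul r x hx ih => rw [map_smul]; exact Submodule.smul_mem _ _ ih
  · -- comul maps I into I ⊗ H + H ⊗ I
    intro x hx
    set J : Submodule ℂ (H ⊗[ℂ] H) := Submodule.span ℂ
      {t : H ⊗[ℂ] H | (∃ a ∈ I, ∃ b : H, t = a ⊗ₜ[ℂ] b)
        ∨ (∃ a : H, ∃ b ∈ I, t = a ⊗ₜ[ℂ] b)} with hJdef
    have hpure : ∀ (a b : H), (a ∈ I ∨ b ∈ I) → ∀ u v : H ⊗[ℂ] H,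
        u * (a ⊗ₜ[ℂ] b) * v ∈ J := by
      intro a b hab u v
      induction u using TensorProduct.induction_on with
      | zero => simpa using zero_mem J
      | tmul x' y' =>
        induction v using TensorProduct.induction_on with
        | zero => simpa using zero_mem J
        | tmul x'' y'' =>
          rw [Algebra.TensorProduct.tmul_mul_tmul, Algebra.TensorProduct.tmul_mul_tmul]
          apply Submodule.subset_span
          rcases hab with h | h
          · exact Or.inl ⟨x' * a * x'', hIdeal _ _ _ h, y' * b * y'', rfl⟩
          · exact Or.inr ⟨x' * a * x'', y' * b * y'', hIdeal _ _ _ h, rfl⟩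
        | add v1 v2 ih1 ih2 => rw [mul_add]; exact add_mem ih1 ih2
      | add u1 u2 ih1 ih2 => rw [add_mul, add_mul]; exact add_mem ih1 ih2
    have hJmul : ∀ u w v : H ⊗[ℂ] H, w ∈ J → u * w * v ∈ J := by
      intro u w v hw
      induction hw using Submodule.span_induction with
      | mem t h =>
        rcases h with ⟨a, ha, b, rfl⟩ | ⟨a, b, hb, rfl⟩
        · exact hpure a b (Or.inl ha) u v
        · exact hpure a b (Or.inr hb) u v
      | zero => simpa using zero_mem J
      | add x y hx hy ihx ihy => rw [mul_add, add_mul]; exact add_mem ihx ihy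
      | smul r x hx ih =>
        rw [mul_smul_comm, smul_mul_assoc]
        exact Submodule.smul_mem _ _ ih
    have hJE : ∀ i j : Fin 4,
        Coalgebra.comul (R := ℂ)
          ((∑ k, star (A k i) * A k j) - (if i = j then 1 else 0)) ∈ J := by
      intro i j
      rw [hComulE i j]
      refine add_mem ?_ ?_
      · refine Submodule.sum_mem _ fun n _ => Submodule.sum_mem _ fun m _ => ?_
        exact Submodule.subset_span (Or.inl ⟨_, hEmem n m, _, rfl⟩)
      · exact Submodule.subset_span (Or.inr ⟨1, _, hEmem i j, rfl⟩)
    induction hx using Submodule.span_induction with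
    | mem x h =>
      obtain ⟨a, b, g, ⟨i, j, rfl⟩, rfl⟩ := h
      rw [Bialgebra.comul_mul, Bialgebra.comul_mul]
      exact hJmul _ _ _ (hJE i j)
    | zero => simpa using zero_mem J
    | add x y hx hy ihx ihy => rw [map_add]; exact add_mem ihx ihy
    | smul r x hx ih => rw [map_smul]; exact Submodule.smul_mem _ _ ih
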